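/- Let n ≥ 2, m ≥ 1, 0 ≤ r ≤ m, and let i, j ∈ {0,…,n−1}^m satisfy wt(i) = wt(j). Then there exists a permutation π of {0,…,n−1}^m that is an automorphism of C_n(r,m), fixes the all-zero index tuple (π(0,…,0) = (0,…,0)), and satisfies π(i) = j. Consequently, the orbit of any nonzero index i under the automorphisms of C_n(r,m) fixing the coordinate (0,…,0) contains all tuples of weight wt(i), and hence has size at least C(m, wt(i))·(n−1)^{wt(i)}. -/

import Mathlib

open Finset

/-- The `l`-th subvector in the concatenation decomposition:
`(subvec v l) i' = v (i'|l)`. -/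
def subvec {n m : ℕ} (v : (Fin (m + 1) → Fin n) → ZMod 2) (l : Fin n) :
    (Fin m → Fin n) → ZMod 2 :=
  fun i' => v (Fin.snoc i' l)

/-- The Berman code `D_n(r,m)`, defined recursively. -/
def BermanD (n : ℕ) : (m : ℕ) → ℕ → Set ((Fin m → Fin n) → ZMod 2)
  | 0, _ => {0}
  | m + 1, r =>
    if r = 0 then {v | ∑ i, v i = 0}
    else if m + 1 ≤ r then {0}
    else {v | (∀ l : Fin n, subvec v l ∈ BermanD n m (r - 1)) ∧
              (fun i' => ∑ l : Fin n, subvec v l i') ∈ BermanD n m r}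

/-- The dual Berman code `C_n(r,m)`, defined recursively. -/
def BermanC (n : ℕ) : (m : ℕ) → ℕ → Set ((Fin m → Fin n) → ZMod 2)
  | 0, _ => Set.univ
  | m + 1, r =>
    if r = 0 then {v | ∃ c : ZMod 2, ∀ i, v i = c}
    else if m + 1 ≤ r then Set.univ
    else {v | ∃ (u : (Fin m → Fin n) → ZMod 2) (w : Fin n → (Fin m → Fin n) → ZMod 2),
            u ∈ BermanC n m r ∧
            (∀ l : Fin n, (l : ℕ) < n - 1 → w l ∈ BermanC n m (r - 1)) ∧
            (∀ l : Fin n, (l : ℕ) = n - 1 → w l = 0) ∧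
            (∀ l : Fin n, subvec v l = u + w l)}

/-- Hamming weight of a binary vector. -/
def hwt {n m : ℕ} (v : (Fin m → Fin n) → ZMod 2) : ℕ :=
  (Finset.univ.filter fun i => v i ≠ 0).card

/-- `preceq j i` means `j ⪯ i`: for every position `k`, either `j k = 0` or `j k = i k`. -/
def preceq {n m : ℕ} (j i : Fin m → Fin n) : Prop :=
  ∀ k, (j k : ℕ) = 0 ∨ j k = i k

instance {n m : ℕ} (j i : Fin m → Fin n) : Decidable (preceq j i) :=
  inferInstanceAs (Decidable (∀ k, (j k : ℕ) = 0 ∨ j k = i k))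

/-- Hamming weight of an index tuple. -/
def wtTuple {n m : ℕ} (i : Fin m → Fin n) : ℕ :=
  (Finset.univ.filter fun k => (i k : ℕ) ≠ 0).card

/-- The vector `c_m(i')`: the indicator of `{i : i ⪯ i'}`. -/
def cVec {n : ℕ} (m : ℕ) (i' : Fin m → Fin n) : (Fin m → Fin n) → ZMod 2 :=
  fun i => if preceq i i' then 1 else 0

/-- The vector `d_m(i')`: the indicator of `{i : i' ⪯ i}`. -/
def dVec {n : ℕ} (m : ℕ) (i' : Fin m → Fin n) : (Fin m → Fin n) → ZMod 2 :=
  fun i => if preceq i' i then 1 else 0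

/-- The matrix `A_m = A_1^{⊗m}`: its entry in row `i` and column `j` is `1` iff `j ⪯ i`. -/
def Amat (n m : ℕ) : Matrix (Fin m → Fin n) (Fin m → Fin n) (ZMod 2) :=
  fun i j => if preceq j i then 1 else 0

-- generators
def genC (n m r : ℕ) : Set ((Fin m → Fin n) → ZMod 2) :=
  dVec m '' {i' | wtTuple i' ≤ r}

def spanC (n m r : ℕ) : Submodule (ZMod 2) ((Fin m → Fin n) → ZMod 2) :=
  Submodule.span (ZMod 2) (genC n m r)

lemma preceq_refl {n m : ℕ} (i : Fin m → Fin n) : preceq i i := fun k => Or.inr rfl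

lemma wt_snoc {n m : ℕ} (i' : Fin m → Fin n) (l : Fin n) :
    wtTuple (Fin.snoc i' l) = wtTuple i' + (if (l : ℕ) ≠ 0 then 1 else 0) := by
  unfold wtTuple
  rw [Finset.card_filter, Finset.card_filter, Fin.sum_univ_castSucc]
  simp [Fin.snoc_castSucc, Fin.snoc_last]

lemma preceq_snoc {n m : ℕ} (i' : Fin m → Fin n) (l' : Fin n) (x : Fin (m+1) → Fin n) :
    preceq (Fin.snoc i' l') x ↔
      (preceq i' (Fin.init x) ∧ ((l' : ℕ) = 0 ∨ l' = x (Fin.last m))) := by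
  constructor
  · intro h
    refine ⟨fun k => ?_, ?_⟩
    · have := h k.castSucc
      simpa [Fin.snoc_castSucc, Fin.init] using this
    · have := h (Fin.last m)
      simpa [Fin.snoc_last] using this
  · rintro ⟨h1, h2⟩ k
    refine Fin.lastCases ?_ ?_ k
    · simpa [Fin.snoc_last] using h2
    · intro k'
      have := h1 k'
      simpa [Fin.snoc_castSucc, Fin.init] using this

lemma dVec_snoc {n m : ℕ} (i' : Fin m → Fin n) (l' : Fin n) (x : Fin (m+1) → Fin n) :
    dVec (m+1) (Fin.snoc i' l') x =
      (if (l' : ℕ) = 0 ∨ l' = x (Fin.last m) then 1 else 0) * dVec m i' (Fin.init x) := by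
  unfold dVec
  rw [if_congr (preceq_snoc i' l' x) rfl rfl]
  by_cases h1 : preceq i' (Fin.init x) <;> by_cases h2 : (l' : ℕ) = 0 ∨ l' = x (Fin.last m) <;>
    simp [h1, h2]

def eVec {n m : ℕ} (i : Fin m → Fin n) : (Fin m → Fin n) → ZMod 2 :=
  fun x => if x = i then 1 else 0

lemma wt_lt_of_preceq {n m : ℕ} {i j : Fin m → Fin n} (h : preceq i j) (hne : j ≠ i) :
    wtTuple i < wtTuple j := by
  unfold wtTuple
  apply Finset.card_lt_card
  rw [Finset.ssubset_iff_of_subset]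
  · obtain ⟨k, hk⟩ : ∃ k, i k ≠ j k := by
      by_contra hc
      push_neg at hc
      exact hne (funext fun k => (hc k).symm)
    have hik : (i k : ℕ) = 0 := (h k).resolve_right hk
    refine ⟨k, ?_, ?_⟩
    · simp only [Finset.mem_filter, Finset.mem_univ, true_and]
      intro hjk
      exact hk (Fin.ext (hik.trans hjk.symm))
    · simp [hik]
  · intro k hk
    simp only [Finset.mem_filter, Finset.mem_univ, true_and] at hk ⊢
    rcases h k with h0 | he
    · exact absurd h0 hk
    · rw [← he]; exact hk

lemma eVec_identity {n m : ℕ} (i : Fin m → Fin n) :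
    eVec i = dVec m i +
      ∑ j ∈ Finset.univ.filter (fun j => preceq i j ∧ j ≠ i), eVec j := by
  funext x
  simp only [Pi.add_apply, Finset.sum_apply]
  have hsum : ∑ j ∈ Finset.univ.filter (fun j => preceq i j ∧ j ≠ i), eVec j x
      = if preceq i x ∧ x ≠ i then 1 else 0 := by
    simp only [eVec]
    rw [Finset.sum_ite_eq]
    simp [Finset.mem_filter]
  rw [hsum]
  unfold eVec dVec
  by_cases hx : x = i
  · subst hx
    simp [preceq_refl]
  · simp only [hx, if_false]
    by_cases hp : preceq i x
    · simp [hp, hx]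
      decide
    · simp [hp, hx]

lemma eVec_mem_span {n m : ℕ} (i : Fin m → Fin n) :
    eVec i ∈ Submodule.span (ZMod 2) (Set.range (dVec m)) := by
  generalize hd : m - wtTuple i = d
  induction d using Nat.strong_induction_on generalizing i with
  | _ d ih =>
    rw [eVec_identity i]
    apply Submodule.add_mem
    · exact Submodule.subset_span ⟨i, rfl⟩
    · apply Submodule.sum_mem
      intro j hj
      simp only [Finset.mem_filter, Finset.mem_univ, true_and] at hj
      have hlt : wtTuple i < wtTuple j := wt_lt_of_preceq hj.1 hj.2
      have hle : wtTuple j ≤ m := by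
        unfold wtTuple
        exact (Finset.card_filter_le _ _).trans (by simp)
      exact ih (m - wtTuple j) (by omega) j rfl

lemma mem_span_comp {M N : Type*} [AddCommMonoid M] [AddCommMonoid N]
    [Module (ZMod 2) M] [Module (ZMod 2) N] (L : M →ₗ[ZMod 2] N)
    {S : Set M} {T : Set N} (h : ∀ v ∈ S, L v ∈ Submodule.span (ZMod 2) T)
    {u : M} (hu : u ∈ Submodule.span (ZMod 2) S) :
    L u ∈ Submodule.span (ZMod 2) T :=
  Submodule.span_le.mpr
    (fun v hv => Submodule.mem_comap.mpr (h v hv) :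
      S ⊆ ((Submodule.span (ZMod 2) T).comap L : Set M)) hu

def liftLM (n m : ℕ) :
    ((Fin m → Fin n) → ZMod 2) →ₗ[ZMod 2] ((Fin (m+1) → Fin n) → ZMod 2) where
  toFun u := fun x => u (Fin.init x)
  map_add' := fun _ _ => rfl
  map_smul' := fun _ _ => rfl

def embedLM (n m : ℕ) (l : Fin n) :
    ((Fin m → Fin n) → ZMod 2) →ₗ[ZMod 2] ((Fin (m+1) → Fin n) → ZMod 2) where
  toFun w := fun x => if x (Fin.last m) = l then w (Fin.init x) else 0
  map_add' := fun a b => by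
    funext x; by_cases h : x (Fin.last m) = l <;> simp [h]
  map_smul' := fun a b => by
    funext x; by_cases h : x (Fin.last m) = l <;> simp [h]

lemma wt_le (n m : ℕ) (i : Fin m → Fin n) : wtTuple i ≤ m := by
  unfold wtTuple
  exact (Finset.card_filter_le _ _).trans (by simp)

lemma lift_dVec {n m : ℕ} (hn : 0 < n) (i' : Fin m → Fin n) :
    liftLM n m (dVec m i') = dVec (m+1) (Fin.snoc i' ⟨0, hn⟩) := by
  funext x
  rw [dVec_snoc]
  simp [liftLM]

lemma embed_dVec_ne {n m : ℕ} (l : Fin n) (hl : (l : ℕ) ≠ 0) (i' : Fin m → Fin n) :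
    embedLM n m l (dVec m i') = dVec (m+1) (Fin.snoc i' l) := by
  funext x
  rw [dVec_snoc]
  simp only [embedLM, LinearMap.coe_mk, AddHom.coe_mk, hl, false_or]
  by_cases h : x (Fin.last m) = l
  · simp [h]
  · rw [if_neg h, if_neg (fun hc : l = x (Fin.last m) => h hc.symm), zero_mul]

lemma embed_dVec_zero {n m : ℕ} (hn : 0 < n) (i' : Fin m → Fin n) :
    embedLM n m ⟨0, hn⟩ (dVec m i') =
      dVec (m+1) (Fin.snoc i' ⟨0, hn⟩) +
        ∑ l ∈ Finset.univ.filter (fun l : Fin n => (l : ℕ) ≠ 0),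
          dVec (m+1) (Fin.snoc i' l) := by
  funext x
  simp only [Pi.add_apply, Finset.sum_apply]
  rw [dVec_snoc]
  have hsum : ∀ l ∈ Finset.univ.filter (fun l : Fin n => (l : ℕ) ≠ 0),
      dVec (m+1) (Fin.snoc i' l) x
        = if l = x (Fin.last m) then dVec m i' (Fin.init x) else 0 := by
    intro l hl
    simp only [Finset.mem_filter, Finset.mem_univ, true_and] at hl
    rw [dVec_snoc]
    simp only [hl, false_or]
    by_cases h : l = x (Fin.last m) <;> simp [h]
  rw [Finset.sum_congr rfl hsum]
  by_cases h0 : x (Fin.last m) = ⟨0, hn⟩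
  · rw [Finset.sum_eq_zero]
    · simp [embedLM, h0]
    · intro l hl
      simp only [Finset.mem_filter, Finset.mem_univ, true_and] at hl
      have : l ≠ x (Fin.last m) := by
        intro hc; rw [hc, h0] at hl; exact hl rfl
      simp [this]
  · rw [Finset.sum_eq_single (x (Fin.last m))]
    · have hc : ((⟨0, hn⟩ : Fin n) : ℕ) = 0 ∨ (⟨0, hn⟩ : Fin n) = x (Fin.last m) :=
        Or.inl rfl
      rw [if_pos hc, if_pos rfl, one_mul]
      simp only [embedLM, LinearMap.coe_mk, AddHom.coe_mk, if_neg h0]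
      exact (CharTwo.add_self_eq_zero _).symm
    · intro b hb hbne
      simp [hbne]
    · intro hx
      simp only [Finset.mem_filter, Finset.mem_univ, true_and, not_not] at hx
      exact absurd (Fin.ext hx : x (Fin.last m) = ⟨0, hn⟩) (fun hc => h0 (by rw [hc]))

lemma subvec_dVec {n m : ℕ} (i' : Fin m → Fin n) (l₀ l : Fin n) (y : Fin m → Fin n) :
    subvec (dVec (m+1) (Fin.snoc i' l₀)) l y
      = (if (l₀ : ℕ) = 0 ∨ l₀ = l then 1 else 0) * dVec m i' y := by
  show dVec (m+1) (Fin.snoc i' l₀) (Fin.snoc y l) = _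
  rw [dVec_snoc]
  simp [Fin.init_snoc, Fin.snoc_last]

lemma mem_spanC_of_le (n m r : ℕ) (hmr : m ≤ r) (v : (Fin m → Fin n) → ZMod 2) :
    v ∈ spanC n m r := by
  have hr : Set.range (dVec m) ⊆ genC n m r := by
    rintro _ ⟨i', rfl⟩
    exact ⟨i', (wt_le n m i').trans hmr, rfl⟩
  have hv : v = ∑ i : (Fin m → Fin n), v i • eVec i := by
    funext x
    simp only [Finset.sum_apply, Pi.smul_apply, eVec, smul_eq_mul, mul_ite, mul_one, mul_zero]
    rw [Finset.sum_ite_eq]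
    simp
  rw [hv]
  exact Submodule.sum_mem _ fun i _ =>
    Submodule.smul_mem _ _ (Submodule.span_mono hr (eVec_mem_span i))

lemma wt_eq_zero {n m : ℕ} {i' : Fin m → Fin n} (h : wtTuple i' ≤ 0) :
    ∀ k, (i' k : ℕ) = 0 := by
  intro k
  by_contra hk
  have hmem : k ∈ Finset.univ.filter (fun k => (i' k : ℕ) ≠ 0) := by simp [hk]
  have := Finset.card_pos.mpr ⟨k, hmem⟩
  unfold wtTuple at h
  omega

lemma lift_gen_mem {n m r : ℕ} (hn : 0 < n) :
    ∀ g ∈ genC n m r, liftLM n m g ∈ spanC n (m+1) r := by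
  rintro _ ⟨i', hi', rfl⟩
  rw [lift_dVec hn]
  refine Submodule.subset_span ⟨_, ?_, rfl⟩
  show wtTuple _ ≤ r
  rw [wt_snoc]
  simpa using hi'

lemma embed_gen_mem {n m r : ℕ} (hn : 0 < n) (hr : 1 ≤ r) (l : Fin n) :
    ∀ g ∈ genC n m (r-1), embedLM n m l g ∈ spanC n (m+1) r := by
  rintro _ ⟨i', hi', rfl⟩
  have hi' : wtTuple i' ≤ r - 1 := hi'
  by_cases hl : (l : ℕ) = 0
  · have hl' : l = ⟨0, hn⟩ := Fin.ext hl
    subst hl'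
    rw [embed_dVec_zero hn]
    apply Submodule.add_mem
    · refine Submodule.subset_span ⟨_, ?_, rfl⟩
      show wtTuple _ ≤ r
      rw [wt_snoc, if_neg (by simp)]
      omega
    · apply Submodule.sum_mem
      intro l' hl'
      simp only [Finset.mem_filter, Finset.mem_univ, true_and] at hl'
      refine Submodule.subset_span ⟨_, ?_, rfl⟩
      show wtTuple _ ≤ r
      rw [wt_snoc, if_pos hl']
      omega
  · rw [embed_dVec_ne l hl]
    refine Submodule.subset_span ⟨_, ?_, rfl⟩
    show wtTuple _ ≤ r
    rw [wt_snoc, if_pos hl]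
    omega

theorem bermanC_eq_span (n : ℕ) (hn : 0 < n) :
    ∀ m r, BermanC n m r = (spanC n m r : Set _) := by
  intro m
  induction m with
  | zero =>
    intro r
    ext v
    simp only [BermanC, Set.mem_univ, true_iff, SetLike.mem_coe]
    have hv : v = v (fun k => k.elim0) • dVec 0 (fun k => k.elim0) := by
      funext x
      have hx : x = fun k => k.elim0 := funext fun k => k.elim0
      subst hx
      have hp : preceq (fun k : Fin 0 => (k.elim0 : Fin n)) (fun k => k.elim0) :=
        fun k => k.elim0
      simp [dVec, hp]
    rw [hv]
    exact Submodule.smul_mem _ _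
      (Submodule.subset_span ⟨_, by simp [wtTuple], rfl⟩)
  | succ m IH =>
    intro r
    by_cases hr0 : r = 0
    · subst hr0
      show (if (0:ℕ) = 0 then _ else _) = _
      rw [if_pos rfl]
      ext v
      simp only [Set.mem_setOf_eq, SetLike.mem_coe]
      constructor
      · rintro ⟨c, hc⟩
        have hv : v = c • dVec (m+1) (fun _ => ⟨0, hn⟩) := by
          funext x
          have hp : preceq (fun _ : Fin (m+1) => (⟨0, hn⟩ : Fin n)) x :=
            fun k => Or.inl rfl
          simp [dVec, hp, hc x]
        rw [hv]
        exact Submodule.smul_mem _ _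
          (Submodule.subset_span ⟨_, by simp [wtTuple], rfl⟩)
      · intro hv
        refine Submodule.span_induction ?_ ?_ ?_ ?_ hv
        · rintro _ ⟨i', hi', rfl⟩
          refine ⟨1, fun x => ?_⟩
          have hp : preceq i' x := fun k => Or.inl (wt_eq_zero hi' k)
          simp [dVec, hp]
        · exact ⟨0, fun _ => rfl⟩
        · rintro x y - - ⟨c, hc⟩ ⟨d, hd⟩
          exact ⟨c + d, fun i => by simp [hc i, hd i]⟩
        · rintro a x - ⟨c, hc⟩
          exact ⟨a * c, fun i => by simp [hc i]⟩
    · by_cases hrm : m + 1 ≤ r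
      · show (if r = 0 then _ else _) = _
        rw [if_neg hr0, if_pos hrm]
        ext v
        simp only [Set.mem_univ, true_iff, SetLike.mem_coe]
        exact mem_spanC_of_le n (m+1) r hrm v
      · have hr1 : 1 ≤ r := Nat.one_le_iff_ne_zero.mpr hr0
        show (if r = 0 then _ else _) = _
        rw [if_neg hr0, if_neg hrm, IH r, IH (r-1)]
        ext v
        simp only [Set.mem_setOf_eq, SetLike.mem_coe]
        constructor
        · rintro ⟨u, w, hu, hw, hw0, hsub⟩
          have hv : v = liftLM n m u + ∑ l : Fin n, embedLM n m l (w l) := by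
            funext x
            have h1 := congrFun (hsub (x (Fin.last m))) (Fin.init x)
            have h2 : subvec v (x (Fin.last m)) (Fin.init x) = v x := by
              show v _ = v x
              rw [Fin.snoc_init_self]
            simp only [Pi.add_apply] at h1
            rw [← h2, h1]
            simp only [liftLM, embedLM, LinearMap.coe_mk, AddHom.coe_mk,
              Pi.add_apply, Finset.sum_apply]
            rw [Finset.sum_ite_eq]
            simp
          rw [hv]
          apply Submodule.add_mem
          · exact mem_span_comp (liftLM n m) (lift_gen_mem hn) hu
          · apply Submodule.sum_mem
            intro l _
            have hcase : (l : ℕ) < n - 1 ∨ (l : ℕ) = n - 1 := by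
              have := l.isLt; omega
            rcases hcase with hlt | heq
            · exact mem_span_comp (embedLM n m l) (embed_gen_mem hn hr1 l) (hw l hlt)
            · rw [hw0 l heq, map_zero]
              exact Submodule.zero_mem _
        · intro hv
          refine Submodule.span_induction ?_ ?_ ?_ ?_ hv
          · rintro _ ⟨i₀, hi₀, rfl⟩
            have hi₀ : wtTuple i₀ ≤ r := hi₀
            set i' := Fin.init i₀ with hi'def
            set l₀ := i₀ (Fin.last m) with hl₀def
            have hsn : Fin.snoc i' l₀ = i₀ := Fin.snoc_init_self i₀
            rw [← hsn] at hi₀ ⊢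
            by_cases hl0 : (l₀ : ℕ) = 0
            · refine ⟨dVec m i', 0, ?_, ?_, ?_, ?_⟩
              · refine Submodule.subset_span ⟨i', ?_, rfl⟩
                show wtTuple i' ≤ r
                rw [wt_snoc, if_neg (by simpa using hl0)] at hi₀
                omega
              · intro l _
                exact Submodule.zero_mem _
              · intro l _
                rfl
              · intro l
                funext y
                rw [subvec_dVec, if_pos (Or.inl hl0), one_mul]
                simp
            · have hwt : wtTuple i' + 1 ≤ r := by
                rw [wt_snoc, if_pos hl0] at hi₀
                exact hi₀
              by_cases hln : (l₀ : ℕ) = n - 1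
              · refine ⟨dVec m i', fun l => if l = l₀ then 0 else dVec m i',
                  ?_, ?_, ?_, ?_⟩
                · exact Submodule.subset_span ⟨i', by simp only [Set.mem_setOf_eq]; omega, rfl⟩
                · intro l hl
                  have hne : l ≠ l₀ := fun hc => by rw [hc, hln] at hl; omega
                  simp only [if_neg hne]
                  exact Submodule.subset_span ⟨i', by simp only [Set.mem_setOf_eq]; omega, rfl⟩
                · intro l hl
                  have heq : l = l₀ := Fin.ext (hl.trans hln.symm)
                  simp only [if_pos heq]
                · intro l
                  funext y
                  rw [subvec_dVec]
                  by_cases he : l = l₀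
                  · rw [if_pos (Or.inr he.symm), one_mul]
                    simp [he]
                  · rw [if_neg (by push_neg; exact ⟨hl0, fun hc => he hc.symm⟩), zero_mul]
                    simp only [Pi.add_apply, if_neg he]
                    exact (CharTwo.add_self_eq_zero _).symm
              · refine ⟨0, fun l => if l = l₀ then dVec m i' else 0,
                  Submodule.zero_mem _, ?_, ?_, ?_⟩
                · intro l _
                  by_cases he : l = l₀
                  · simp only [if_pos he]
                    exact Submodule.subset_span ⟨i', by simp only [Set.mem_setOf_eq]; omega, rfl⟩
                  · simp only [if_neg he]
                    exact Submodule.zero_mem _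
                · intro l hl
                  have hne : l ≠ l₀ := fun hc => by rw [← hc, hl] at hln; exact hln rfl
                  simp only [if_neg hne]
                · intro l
                  funext y
                  rw [subvec_dVec]
                  by_cases he : l = l₀
                  · rw [if_pos (Or.inr he.symm), one_mul]
                    simp [he]
                  · rw [if_neg (by push_neg; exact ⟨hl0, fun hc => he hc.symm⟩), zero_mul]
                    simp [he]
          · exact ⟨0, 0, Submodule.zero_mem _, fun l _ => Submodule.zero_mem _,
              fun l _ => rfl, fun l => by funext y; simp [subvec]⟩
          · rintro x y - - ⟨u₁, w₁, hu₁, hw₁, hw₁0, hsub₁⟩ ⟨u₂, w₂, hu₂, hw₂, hw₂0, hsub₂⟩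
            refine ⟨u₁ + u₂, fun l => w₁ l + w₂ l, Submodule.add_mem _ hu₁ hu₂,
              fun l hl => Submodule.add_mem _ (hw₁ l hl) (hw₂ l hl),
              fun l hl => by show w₁ l + w₂ l = 0; rw [hw₁0 l hl, hw₂0 l hl, add_zero],
              fun l => ?_⟩
            have : subvec (x + y) l = subvec x l + subvec y l := rfl
            rw [this, hsub₁ l, hsub₂ l]
            exact add_add_add_comm _ _ _ _
          · rintro a x - ⟨u, w, hu, hw, hw0, hsub⟩
            refine ⟨a • u, fun l => a • w l, Submodule.smul_mem _ _ hu,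
              fun l hl => Submodule.smul_mem _ _ (hw l hl),
              fun l hl => by show a • w l = 0; rw [hw0 l hl, smul_zero],
              fun l => ?_⟩
            have : subvec (a • x) l = a • subvec x l := rfl
            rw [this, hsub l, smul_add]

def monPerm {n m : ℕ} (σ : Equiv.Perm (Fin m)) (τ : Fin m → Equiv.Perm (Fin n)) :
    Equiv.Perm (Fin m → Fin n) where
  toFun x := fun k => τ k (x (σ k))
  invFun y := fun k => (τ (σ.symm k)).symm (y (σ.symm k))
  left_inv x := by funext k; simp
  right_inv y := by funext k; simp

def compLM (n m : ℕ) (π : Equiv.Perm (Fin m → Fin n)) :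
    ((Fin m → Fin n) → ZMod 2) →ₗ[ZMod 2] ((Fin m → Fin n) → ZMod 2) where
  toFun v := fun x => v (π x)
  map_add' := fun _ _ => rfl
  map_smul' := fun _ _ => rfl

variable {n m : ℕ}

lemma tau_symm_zero (hn : 0 < n) (σ : Equiv.Perm (Fin m)) (τ : Fin m → Equiv.Perm (Fin n))
    (hτ : ∀ k, τ k ⟨0, hn⟩ = ⟨0, hn⟩) (k : Fin m) : (τ k).symm ⟨0, hn⟩ = ⟨0, hn⟩ :=
  (Equiv.symm_apply_eq _).mpr (hτ k).symm

lemma tau_val_zero (hn : 0 < n) (σ : Equiv.Perm (Fin m)) (τ : Fin m → Equiv.Perm (Fin n))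
    (hτ : ∀ k, τ k ⟨0, hn⟩ = ⟨0, hn⟩) (k : Fin m) (a : Fin n) : ((τ k a : Fin n) : ℕ) = 0 ↔ (a : ℕ) = 0 := by
  constructor
  · intro h
    have : τ k a = ⟨0, hn⟩ := Fin.ext h
    have := (Equiv.apply_eq_iff_eq_symm_apply _).mp this
    rw [tau_symm_zero hn σ τ hτ] at this
    rw [this]
  · intro h
    have : a = ⟨0, hn⟩ := Fin.ext h
    rw [this, hτ k]

lemma preceq_monPerm (hn : 0 < n) (σ : Equiv.Perm (Fin m)) (τ : Fin m → Equiv.Perm (Fin n))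
    (hτ : ∀ k, τ k ⟨0, hn⟩ = ⟨0, hn⟩) (i' x : Fin m → Fin n) :
    preceq i' (monPerm σ τ x) ↔ preceq ((monPerm σ τ).symm i') x := by
  have hsymm : ∀ l, (monPerm σ τ).symm i' l = (τ (σ.symm l)).symm (i' (σ.symm l)) :=
    fun l => rfl
  constructor
  · intro h l
    rw [hsymm]
    rcases h (σ.symm l) with h0 | he
    · left
      have : i' (σ.symm l) = ⟨0, hn⟩ := Fin.ext h0
      rw [this, tau_symm_zero hn σ τ hτ]
    · right
      rw [he]
      simp [monPerm]
  · intro h k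
    have := h (σ k)
    rw [hsymm] at this
    simp only [Equiv.symm_apply_apply] at this
    rcases this with h0 | he
    · left
      have : (τ k).symm (i' k) = ⟨0, hn⟩ := Fin.ext h0
      have := (Equiv.symm_apply_eq _).mp this
      rw [hτ k] at this
      rw [this]
    · right
      have := (Equiv.symm_apply_eq _).mp he
      rw [this]
      simp [monPerm]

lemma dVec_monPerm (hn : 0 < n) (σ : Equiv.Perm (Fin m)) (τ : Fin m → Equiv.Perm (Fin n))
    (hτ : ∀ k, τ k ⟨0, hn⟩ = ⟨0, hn⟩) (i' : Fin m → Fin n) :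
    compLM n m (monPerm σ τ) (dVec m i') = dVec m ((monPerm σ τ).symm i') := by
  funext x
  show dVec m i' (monPerm σ τ x) = _
  unfold dVec
  rw [if_congr (preceq_monPerm hn σ τ hτ i' x) rfl rfl]

lemma wt_monPerm_symm (hn : 0 < n) (σ : Equiv.Perm (Fin m)) (τ : Fin m → Equiv.Perm (Fin n))
    (hτ : ∀ k, τ k ⟨0, hn⟩ = ⟨0, hn⟩) (i' : Fin m → Fin n) :
    wtTuple ((monPerm σ τ).symm i') = wtTuple i' := by
  unfold wtTuple
  apply Finset.card_bij' (fun l _ => σ.symm l) (fun k _ => σ k)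
  · intro l hl
    simp only [Finset.mem_filter, Finset.mem_univ, true_and] at hl ⊢
    have hsymm : (monPerm σ τ).symm i' l = (τ (σ.symm l)).symm (i' (σ.symm l)) := rfl
    rw [hsymm] at hl
    intro hc
    apply hl
    have : i' (σ.symm l) = ⟨0, hn⟩ := Fin.ext hc
    rw [this, tau_symm_zero hn σ τ hτ]
  · intro k hk
    simp only [Finset.mem_filter, Finset.mem_univ, true_and] at hk ⊢
    have hsymm : (monPerm σ τ).symm i' (σ k) = (τ k).symm (i' k) := by
      show (τ (σ.symm (σ k))).symm (i' (σ.symm (σ k))) = _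
      rw [Equiv.symm_apply_apply]
    rw [hsymm]
    intro hc
    apply hk
    have : (τ k).symm (i' k) = ⟨0, hn⟩ := Fin.ext hc
    have := (Equiv.symm_apply_eq _).mp this
    rw [hτ k] at this
    rw [this]
  · intro l _; simp
  · intro k _; simp

lemma monPerm_auto (hn : 0 < n) (σ : Equiv.Perm (Fin m)) (τ : Fin m → Equiv.Perm (Fin n))
    (hτ : ∀ k, τ k ⟨0, hn⟩ = ⟨0, hn⟩) (r : ℕ) :
    ∀ v ∈ BermanC n m r, (fun x => v (monPerm σ τ x)) ∈ BermanC n m r := by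
  rw [bermanC_eq_span n hn]
  intro v hv
  show compLM n m (monPerm σ τ) v ∈ spanC n m r
  refine mem_span_comp (compLM n m (monPerm σ τ)) ?_ hv
  rintro _ ⟨i', hi', rfl⟩
  rw [dVec_monPerm hn σ τ hτ]
  refine Submodule.subset_span ⟨_, ?_, rfl⟩
  show wtTuple _ ≤ r
  rw [wt_monPerm_symm hn σ τ hτ]
  exact hi'

lemma exists_good_perm {n m : ℕ} (hn : 0 < n) (i j : Fin m → Fin n)
    (hij : wtTuple i = wtTuple j) :
    ∃ (σ : Equiv.Perm (Fin m)) (τ : Fin m → Equiv.Perm (Fin n)),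
      (∀ k, τ k ⟨0, hn⟩ = ⟨0, hn⟩) ∧ (∀ k, monPerm σ τ i k = j k) := by
  classical
  set p : Fin m → Prop := fun k => (j k : ℕ) ≠ 0 with hp
  set q : Fin m → Prop := fun k => (i k : ℕ) ≠ 0 with hq
  have hcard : Fintype.card {k // p k} = Fintype.card {k // q k} := by
    rw [Fintype.card_subtype, Fintype.card_subtype]
    exact hij.symm
  have hcard' : Fintype.card {k // ¬ p k} = Fintype.card {k // ¬ q k} := by
    have h1 := Fintype.card_subtype_compl p
    have h2 := Fintype.card_subtype_compl q
    rw [h1, h2, hcard]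
  let e : {k // p k} ≃ {k // q k} := Fintype.equivOfCardEq hcard
  let f : {k // ¬ p k} ≃ {k // ¬ q k} := Fintype.equivOfCardEq hcard'
  let σ : Equiv.Perm (Fin m) := Equiv.subtypeCongr e f
  have hσpos : ∀ k, p k → q (σ k) := by
    intro k hk
    have : σ k = (e ⟨k, hk⟩ : Fin m) := by
      show Equiv.subtypeCongr e f k = _
      unfold Equiv.subtypeCongr
      simp [Equiv.sumCompl_symm_apply_of_pos hk]
    rw [this]
    exact (e ⟨k, hk⟩).2
  have hσneg : ∀ k, ¬ p k → ¬ q (σ k) := by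
    intro k hk
    have : σ k = (f ⟨k, hk⟩ : Fin m) := by
      show Equiv.subtypeCongr e f k = _
      unfold Equiv.subtypeCongr
      simp [Equiv.sumCompl_symm_apply_of_neg hk]
    rw [this]
    exact (f ⟨k, hk⟩).2
  refine ⟨σ, fun k => if h : p k then Equiv.swap (i (σ k)) (j k) else 1, ?_, ?_⟩
  · intro k
    by_cases h : p k
    · simp only [dif_pos h]
      have h1 : (⟨0, hn⟩ : Fin n) ≠ i (σ k) := by
        intro hc
        exact hσpos k h (by rw [← hc])
      have h2 : (⟨0, hn⟩ : Fin n) ≠ j k := by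
        intro hc
        exact h (by rw [← hc])
      exact Equiv.swap_apply_of_ne_of_ne h1 h2
    · simp only [dif_neg h]
      rfl
  · intro k
    show (if h : p k then Equiv.swap (i (σ k)) (j k) else 1) (i (σ k)) = j k
    by_cases h : p k
    · rw [dif_pos h]
      exact Equiv.swap_apply_left _ _
    · rw [dif_neg h]
      have h1 : (i (σ k) : ℕ) = 0 := not_not.mp (hσneg k h)
      have h2 : (j k : ℕ) = 0 := not_not.mp h
      exact Fin.ext (h1.trans h2.symm)

lemma card_nonzero_fin (n : ℕ) (hn : 0 < n) :
    Fintype.card {x : Fin n // (x : ℕ) ≠ 0} = n - 1 := by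
  rw [Fintype.card_subtype]
  have hsplit := Finset.card_filter_add_card_filter_not
    (s := (Finset.univ : Finset (Fin n))) (p := fun x => (x : ℕ) = 0)
  have hone : (Finset.univ.filter fun x : Fin n => (x : ℕ) = 0) = {⟨0, hn⟩} := by
    ext x
    simp [Fin.ext_iff]
  rw [hone] at hsplit
  simp only [Finset.card_singleton, Finset.card_univ, Fintype.card_fin] at hsplit
  have : (Finset.univ.filter fun x : Fin n => ¬ (x : ℕ) = 0).card = n - 1 := by omega
  convert this using 2

lemma card_supp_eq (n m : ℕ) (hn : 0 < n) (s : Finset (Fin m)) :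
    (Finset.univ.filter fun f : Fin m → Fin n =>
      (Finset.univ.filter fun k => (f k : ℕ) ≠ 0) = s).card = (n-1) ^ s.card := by
  classical
  rw [← Fintype.card_subtype]
  have E : {f : Fin m → Fin n // (Finset.univ.filter fun k => (f k : ℕ) ≠ 0) = s}
      ≃ ({k : Fin m // k ∈ s} → {x : Fin n // (x : ℕ) ≠ 0}) := by
    refine ⟨fun f k => ⟨f.1 k.1, ?_⟩, fun g => ⟨fun k => if h : k ∈ s then (g ⟨k, h⟩).1
      else ⟨0, hn⟩, ?_⟩, ?_, ?_⟩
    · have hmem : (k : Fin m) ∈ Finset.univ.filter (fun k' => ((f.1 k' : ℕ) ≠ 0)) := by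
        rw [f.2]; exact k.2
      exact (Finset.mem_filter.mp hmem).2
    · ext k
      simp only [Finset.mem_filter, Finset.mem_univ, true_and]
      by_cases h : k ∈ s
      · simp only [dif_pos h, h, iff_true]
        exact (g ⟨k, h⟩).2
      · simp only [dif_neg h, h, iff_false, not_not]
        rfl
    · rintro ⟨f, hf⟩
      apply Subtype.ext
      funext k
      by_cases h : k ∈ s
      · simp only [dif_pos h]
      · simp only [dif_neg h]
        rw [← hf] at h
        simp only [Finset.mem_filter, Finset.mem_univ, true_and, not_not] at h
        exact (Fin.ext h).symm
    · intro g
      funext k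
      apply Subtype.ext
      simp only [dif_pos k.2]
  rw [Fintype.card_congr E, Fintype.card_fun, card_nonzero_fin n hn, Fintype.card_coe]

lemma count_wt (n m w : ℕ) (hn : 0 < n) :
    (Finset.univ.filter fun f : Fin m → Fin n => wtTuple f = w).card
      = m.choose w * (n-1) ^ w := by
  classical
  rw [Finset.card_eq_sum_card_fiberwise
    (f := fun f : Fin m → Fin n => Finset.univ.filter fun k => (f k : ℕ) ≠ 0)
    (t := Finset.powersetCard w Finset.univ)
    (fun f hf => by
      rw [Finset.mem_coe, Finset.mem_powersetCard_univ]
      exact (Finset.mem_filter.mp (Finset.mem_coe.mp hf)).2)]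
  have hterm : ∀ s ∈ Finset.powersetCard w (Finset.univ : Finset (Fin m)),
      (Finset.filter (fun f : Fin m → Fin n =>
        (Finset.univ.filter fun k => (f k : ℕ) ≠ 0) = s)
        (Finset.univ.filter fun f => wtTuple f = w)).card = (n-1) ^ w := by
    intro s hs
    rw [Finset.mem_powersetCard_univ] at hs
    rw [Finset.filter_filter]
    have : Finset.filter (fun f : Fin m → Fin n =>
        wtTuple f = w ∧ (Finset.univ.filter fun k => (f k : ℕ) ≠ 0) = s) Finset.univ
        = Finset.filter (fun f : Fin m → Fin n =>
          (Finset.univ.filter fun k => (f k : ℕ) ≠ 0) = s) Finset.univ := by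
      apply Finset.filter_congr
      intro f _
      constructor
      · exact fun h => h.2
      · intro h
        exact ⟨by rw [wtTuple, h, hs], h⟩
    rw [this, card_supp_eq n m hn s, hs]
  rw [Finset.sum_congr rfl hterm, Finset.sum_const, Finset.card_powersetCard,
    Finset.card_univ, Fintype.card_fin, smul_eq_mul]


/-- for index tuples of equal weight there is an automorphism of
`C_n(r,m)` fixing the all-zero index and mapping one to the other; consequently the
orbit of any index under the automorphisms fixing the all-zero coordinate has size at
least `C(m, wt(i))·(n−1)^{wt(i)}`. -/
theorem berman_orbit (n m r : ℕ) (hn : 2 ≤ n) (hm : 1 ≤ m) (hr : r ≤ m)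
    (i j : Fin m → Fin n) (hij : wtTuple i = wtTuple j) :
    (∃ π : Equiv.Perm (Fin m → Fin n),
        (∀ v ∈ BermanC n m r, (fun x => v (π x)) ∈ BermanC n m r) ∧
        π (fun _ => (⟨0, by omega⟩ : Fin n)) = (fun _ => (⟨0, by omega⟩ : Fin n)) ∧
        π i = j) ∧
    m.choose (wtTuple i) * (n - 1) ^ wtTuple i ≤
      Set.ncard {j' : Fin m → Fin n |
        ∃ π : Equiv.Perm (Fin m → Fin n),
          (∀ v ∈ BermanC n m r, (fun x => v (π x)) ∈ BermanC n m r) ∧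
          π (fun _ => (⟨0, by omega⟩ : Fin n)) = (fun _ => (⟨0, by omega⟩ : Fin n)) ∧
          π i = j'} := by
  have hn0 : 0 < n := by omega
  have key : ∀ j' : Fin m → Fin n, wtTuple i = wtTuple j' →
      ∃ π : Equiv.Perm (Fin m → Fin n),
        (∀ v ∈ BermanC n m r, (fun x => v (π x)) ∈ BermanC n m r) ∧
        π (fun _ => (⟨0, by omega⟩ : Fin n)) = (fun _ => (⟨0, by omega⟩ : Fin n)) ∧
        π i = j' := by
    intro j' hij'
    obtain ⟨σ, τ, hτ, hmap⟩ := exists_good_perm hn0 i j' hij'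
    refine ⟨monPerm σ τ, monPerm_auto hn0 σ τ hτ r, ?_, funext hmap⟩
    funext k
    exact hτ k
  refine ⟨key j hij, ?_⟩
  have hsub : (↑(Finset.univ.filter fun j' : Fin m → Fin n => wtTuple j' = wtTuple i)
      : Set (Fin m → Fin n)) ⊆
      {j' : Fin m → Fin n |
        ∃ π : Equiv.Perm (Fin m → Fin n),
          (∀ v ∈ BermanC n m r, (fun x => v (π x)) ∈ BermanC n m r) ∧
          π (fun _ => (⟨0, by omega⟩ : Fin n)) = (fun _ => (⟨0, by omega⟩ : Fin n)) ∧
          π i = j'} := by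
    intro j' hj'
    simp only [Finset.coe_filter, Finset.mem_univ, true_and, Set.mem_setOf_eq] at hj'
    exact key j' hj'.symm
  have hcount := count_wt n m (wtTuple i) hn0
  calc m.choose (wtTuple i) * (n - 1) ^ wtTuple i
      = (Finset.univ.filter fun f : Fin m → Fin n => wtTuple f = wtTuple i).card :=
        hcount.symm
    _ = (↑(Finset.univ.filter fun j' : Fin m → Fin n => wtTuple j' = wtTuple i)
          : Set (Fin m → Fin n)).ncard := (Set.ncard_coe_finset _).symm
    _ ≤ _ := Set.ncard_le_ncard hsub (Set.toFinite _)
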